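/- Let θ_0 = (θ_{0,i}) satisfy θ_{0,i}^2 i^{1+2β} ≤ M for all i (hyperrectangle Θ^β(M)), let l = (l_i) satisfy ∑_{i=j}^{j+K−1} l_i^2 ≤ R^2 j^{−1−2q} for all j > j_0 (hence |l_i| ≤ R K^{1/2+q} i^{−1/2−q} up to a constant for q ≤ −1/2, or simply |l_i| ≲ i^{−1/2−q}), and let κ_i satisfy C^{−2} i^{−2p} ≤ κ_i^2 ≤ C^2 i^{−2p}. If β + q < 1 + 2α + 2p and β + q > 0, then the bias B_n^L(α) = |∑_i l_i θ_{0,i} i^{1+2α} κ_i^{−2} / (i^{1+2α} κ_i^{−2} + n)| is bounded above by a constant (depending on M, R, C, K, p, q, α, β) times n^{−(β+q)/(1+2α+2p)} for all n ≥ e^{1+2α+2p}. -/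

import Mathlib

open Real Finset

private lemma head_step {t : ℝ} (ht : 0 < t) (ht1 : t ≤ 1) (i : ℕ) :
    t * ((i : ℝ) + 1) ^ (t - 1) ≤ ((i : ℝ) + 1) ^ t - (i : ℝ) ^ t := by
  set x : ℝ := (i : ℝ) with hx
  have hx0 : (0 : ℝ) ≤ x := Nat.cast_nonneg i
  have hx1 : (0 : ℝ) < x + 1 := by linarith
  have hs : (-1 : ℝ) ≤ -(1 / (x + 1)) := by
    have h1 : 1 / (x + 1) ≤ 1 := by
      rw [div_le_one hx1]; linarith
    linarith
  have hb := rpow_one_add_le_one_add_mul_self hs ht.le ht1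
  have h1 : (1 : ℝ) + -(1 / (x + 1)) = x / (x + 1) := by field_simp; ring
  rw [h1] at hb
  have h2 : (x / (x + 1)) ^ t * (x + 1) ^ t = x ^ t := by
    rw [Real.div_rpow hx0 hx1.le, div_mul_cancel₀]
    exact (Real.rpow_pos_of_pos hx1 t).ne'
  have h3 : ((1 : ℝ) + t * -(1 / (x + 1))) * (x + 1) ^ t
      = (x + 1) ^ t - t * ((x + 1) ^ t / (x + 1)) := by ring
  have h4 : (x + 1) ^ t / (x + 1) = (x + 1) ^ (t - 1) := by
    rw [Real.rpow_sub hx1, Real.rpow_one]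
  have h5 := mul_le_mul_of_nonneg_right hb (Real.rpow_pos_of_pos hx1 t).le
  rw [h2, h3, h4] at h5
  linarith

private lemma tail_step {c x : ℝ} (hc : 0 < c) (hx : 1 ≤ x) :
    (x + 1) ^ (-1 - c) ≤ (x ^ (-c) - (x + 1) ^ (-c)) / c := by
  have hx0 : (0 : ℝ) < x := lt_of_lt_of_le one_pos hx
  have hx1 : (0 : ℝ) < x + 1 := by linarith
  have hs1 : (-1 : ℝ) ≤ 1 / x := by
    have : (0 : ℝ) ≤ 1 / x := by positivity
    linarith
  have hb := one_add_mul_self_le_rpow_one_add hs1 (p := 1 + c) (by linarith)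
  have h1 : (1 : ℝ) + 1 / x = (x + 1) / x := by field_simp
  rw [h1] at hb
  have h2 : ((x + 1) / x) ^ (1 + c) = (x + 1) ^ (1 + c) * x ^ (-(1 + c)) := by
    rw [Real.div_rpow hx1.le hx0.le, Real.rpow_neg hx0.le, div_eq_mul_inv]
  rw [h2] at hb
  set u : ℝ := (x + 1) ^ (-(1 + c)) with hu
  have hu0 : 0 < u := Real.rpow_pos_of_pos hx1 _
  have huv : u * (x + 1) ^ (1 + c) = 1 := by
    rw [hu, ← Real.rpow_add hx1, neg_add_cancel, Real.rpow_zero]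
  have hax : x ^ (-(1 + c)) * x = x ^ (-c) := by
    nth_rewrite 2 [← Real.rpow_one x]
    rw [← Real.rpow_add hx0]
    congr 1; ring
  have hux : u * (x + 1) = (x + 1) ^ (-c) := by
    nth_rewrite 1 [← Real.rpow_one (x + 1)]
    rw [hu, ← Real.rpow_add hx1]
    congr 1; ring
  have h5 := mul_le_mul_of_nonneg_left (mul_le_mul_of_nonneg_right hb hx0.le) hu0.le
  have hL : u * ((1 + (1 + c) * (1 / x)) * x) = u * (x + 1) + c * u := by
    field_simp; ring
  have hR : u * ((x + 1) ^ (1 + c) * x ^ (-(1 + c)) * x) = x ^ (-c) := by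
    calc u * ((x + 1) ^ (1 + c) * x ^ (-(1 + c)) * x)
        = (u * (x + 1) ^ (1 + c)) * (x ^ (-(1 + c)) * x) := by ring
      _ = x ^ (-c) := by rw [huv, hax, one_mul]
  rw [hL, hR, hux] at h5
  rw [le_div_iff₀ hc]
  have he : (x + 1) ^ (-1 - c) = u := by
    rw [hu]; congr 1; ring
  rw [he]; linarith


private lemma key_bound {r c : ℝ} (hc : 0 < c) (hcr : c < r) :
    ∃ K > 0, ∀ n : ℝ, Real.exp r ≤ n →
      Summable (fun i : ℕ => ((i : ℝ) + 1) ^ (r - 1 - c) / (((i : ℝ) + 1) ^ r + n)) ∧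
      ∑' i : ℕ, ((i : ℝ) + 1) ^ (r - 1 - c) / (((i : ℝ) + 1) ^ r + n) ≤ K * n ^ (-c / r) := by
  have hr : 0 < r := hc.trans hcr
  have hrc : 0 < r - c := by linarith
  have hE1 : (0 : ℝ) < 1 - Real.exp (-1) := by
    have : Real.exp (-1) < 1 := Real.exp_lt_one_iff.2 (by norm_num)
    linarith
  refine ⟨(1 + 1 / (r - c)) + (1 - Real.exp (-1)) ^ (-c) / c, by positivity, ?_⟩
  intro n hn
  have hn1 : (1 : ℝ) < n := lt_of_lt_of_le (Real.one_lt_exp_iff.2 hr) hn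
  have hn0 : (0 : ℝ) < n := lt_trans one_pos hn1
  set s : ℝ := r - 1 - c with hs
  set g : ℕ → ℝ := fun i => ((i : ℝ) + 1) ^ s / (((i : ℝ) + 1) ^ r + n) with hg
  have hjpos : ∀ i : ℕ, (0 : ℝ) < (i : ℝ) + 1 := fun i => by positivity
  have hden : ∀ i : ℕ, (0 : ℝ) < ((i : ℝ) + 1) ^ r + n :=
    fun i => by have := Real.rpow_pos_of_pos (hjpos i) r; linarith
  have hg_nonneg : ∀ i : ℕ, 0 ≤ g i := fun i =>
    div_nonneg (Real.rpow_pos_of_pos (hjpos i) s).le (hden i).le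
  have hg_le : ∀ i : ℕ, g i ≤ ((i : ℝ) + 1) ^ (-1 - c) := by
    intro i
    have h1 : ((i : ℝ) + 1) ^ (-1 - c) = ((i : ℝ) + 1) ^ s / ((i : ℝ) + 1) ^ r := by
      rw [← Real.rpow_sub (hjpos i)]; congr 1; rw [hs]; ring
    rw [h1, hg]
    apply div_le_div_of_nonneg_left (Real.rpow_pos_of_pos (hjpos i) s).le
      (Real.rpow_pos_of_pos (hjpos i) r)
    linarith
  have hsum_h : Summable (fun i : ℕ => ((i : ℝ) + 1) ^ (-1 - c)) := by
    have h0 : Summable (fun i : ℕ => (i : ℝ) ^ (-1 - c)) :=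
      Real.summable_nat_rpow.2 (by linarith)
    have h1 := (summable_nat_add_iff 1).2 h0
    simpa using h1
  have hgsum : Summable g := Summable.of_nonneg_of_le hg_nonneg hg_le hsum_h
  refine ⟨hgsum, ?_⟩
  set N : ℕ := ⌊n ^ (1 / r)⌋₊ with hN
  have hnr0 : (0 : ℝ) < n ^ (1 / r) := Real.rpow_pos_of_pos hn0 _
  have hE : Real.exp 1 ≤ n ^ (1 / r) := by
    have h1 : (Real.exp r) ^ (1 / r) ≤ n ^ (1 / r) :=
      Real.rpow_le_rpow (Real.exp_pos r).le hn (by positivity)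
    rwa [← Real.exp_one_rpow r, ← Real.rpow_mul (Real.exp_pos 1).le,
      mul_one_div, div_self hr.ne', Real.rpow_one] at h1
  have hexp2 : (2 : ℝ) ≤ Real.exp 1 := by
    have := Real.add_one_le_exp 1; linarith
  have hNn : (N : ℝ) ≤ n ^ (1 / r) := Nat.floor_le hnr0.le
  have hN1 : 1 ≤ N := by
    have h2 : (1 : ℝ) ≤ n ^ (1 / r) := by linarith
    exact Nat.le_floor (by exact_mod_cast h2)
  have hNpos : (0 : ℝ) < (N : ℝ) := by exact_mod_cast hN1
  have hNge : n ^ (1 / r) * (1 - Real.exp (-1)) ≤ (N : ℝ) := by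
    have h1 : n ^ (1 / r) - 1 < (N : ℝ) := Nat.sub_one_lt_floor _
    have h2 : (1 : ℝ) ≤ n ^ (1 / r) * Real.exp (-1) := by
      have h3 : Real.exp 1 * Real.exp (-1) ≤ n ^ (1 / r) * Real.exp (-1) :=
        mul_le_mul_of_nonneg_right hE (Real.exp_pos _).le
      rwa [← Real.exp_add, add_neg_cancel, Real.exp_zero] at h3
    nlinarith
  have hpow : (n ^ (1 / r)) ^ (s + 1) / n = n ^ (-c / r) := by
    rw [← Real.rpow_mul hn0.le]
    have h1 := Real.rpow_sub hn0 (1 / r * (s + 1)) 1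
    rw [Real.rpow_one] at h1
    rw [← h1]
    congr 1
    rw [hs]; field_simp; ring
  -- head bound
  have head_bound : ∑ i ∈ range N, g i ≤ (1 + 1 / (r - c)) * n ^ (-c / r) := by
    have step1 : ∑ i ∈ range N, g i ≤ (∑ i ∈ range N, ((i : ℝ) + 1) ^ s) / n := by
      rw [sum_div]
      apply sum_le_sum
      intro i _
      rw [hg]
      apply div_le_div_of_nonneg_left (Real.rpow_pos_of_pos (hjpos i) s).le hn0
      have := Real.rpow_pos_of_pos (hjpos i) r; linarith
    have step2 : ∑ i ∈ range N, ((i : ℝ) + 1) ^ s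
        ≤ (1 + 1 / (r - c)) * (n ^ (1 / r)) ^ (s + 1) := by
      have hcoef : (0:ℝ) < 1 / (r - c) := by positivity
      rcases le_or_gt 0 s with hs0 | hs0
      · have hterm : ∀ i ∈ range N, ((i : ℝ) + 1) ^ s ≤ (n ^ (1 / r)) ^ s := by
          intro i hi
          apply Real.rpow_le_rpow (hjpos i).le _ hs0
          have h4 : (i : ℝ) + 1 ≤ (N : ℝ) := by
            have := mem_range.1 hi
            exact_mod_cast Nat.succ_le_of_lt this
          linarith
        have hmul : n ^ (1 / r) * (n ^ (1 / r)) ^ s = (n ^ (1 / r)) ^ (s + 1) := by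
          nth_rewrite 1 [← Real.rpow_one (n ^ (1 / r))]
          rw [← Real.rpow_add hnr0]; congr 1; ring
        calc ∑ i ∈ range N, ((i : ℝ) + 1) ^ s ≤ ∑ _i ∈ range N, (n ^ (1 / r)) ^ s :=
              sum_le_sum hterm
          _ = (N : ℝ) * (n ^ (1 / r)) ^ s := by rw [sum_const, card_range, nsmul_eq_mul]
          _ ≤ n ^ (1 / r) * (n ^ (1 / r)) ^ s :=
              mul_le_mul_of_nonneg_right hNn (Real.rpow_pos_of_pos hnr0 s).le
          _ = (n ^ (1 / r)) ^ (s + 1) := hmul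
          _ ≤ (1 + 1 / (r - c)) * (n ^ (1 / r)) ^ (s + 1) := by
              nth_rewrite 1 [← one_mul ((n ^ (1 / r)) ^ (s + 1))]
              apply mul_le_mul_of_nonneg_right _ (Real.rpow_pos_of_pos hnr0 _).le
              linarith
      · have ht0 : (0:ℝ) < s + 1 := by rw [hs]; linarith
        have ht1 : s + 1 ≤ 1 := by linarith
        have htel : ∑ i ∈ range N, (((i : ℝ) + 1) ^ (s+1) - (i : ℝ) ^ (s+1)) = (N : ℝ) ^ (s+1) := by
          have h6 := Finset.sum_range_sub (f := fun i : ℕ => ((i : ℝ)) ^ (s+1)) N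
          simp only [Nat.cast_add, Nat.cast_one] at h6
          rw [h6, Nat.cast_zero, Real.zero_rpow ht0.ne', sub_zero]
        have hterm : ∀ i ∈ range N, ((i : ℝ) + 1) ^ s
            ≤ (((i : ℝ) + 1) ^ (s+1) - (i : ℝ) ^ (s+1)) / (s+1) := by
          intro i _
          rw [le_div_iff₀ ht0]
          have h7 := head_step ht0 ht1 i
          have he : ((i : ℝ) + 1) ^ s = ((i : ℝ) + 1) ^ (s + 1 - 1) := by
            congr 1; ring
          rw [he]; linarith
        calc ∑ i ∈ range N, ((i : ℝ) + 1) ^ s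
            ≤ ∑ i ∈ range N, (((i : ℝ) + 1) ^ (s+1) - (i : ℝ) ^ (s+1)) / (s+1) :=
              sum_le_sum hterm
          _ = (N : ℝ) ^ (s+1) / (s+1) := by rw [← sum_div, htel]
          _ ≤ (n ^ (1 / r)) ^ (s+1) / (s+1) :=
              div_le_div_of_nonneg_right (Real.rpow_le_rpow hNpos.le hNn ht0.le) ht0.le
          _ ≤ (1 + 1 / (r - c)) * (n ^ (1 / r)) ^ (s + 1) := by
              rw [div_eq_mul_inv, mul_comm]
              apply mul_le_mul_of_nonneg_right _ (Real.rpow_pos_of_pos hnr0 _).le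
              have h8 : (s + 1)⁻¹ = 1 / (r - c) := by rw [hs, one_div]; congr 1; ring
              rw [h8]; linarith
    calc ∑ i ∈ range N, g i ≤ (∑ i ∈ range N, ((i : ℝ) + 1) ^ s) / n := step1
      _ ≤ ((1 + 1 / (r - c)) * (n ^ (1 / r)) ^ (s + 1)) / n :=
          div_le_div_of_nonneg_right step2 hn0.le
      _ = (1 + 1 / (r - c)) * n ^ (-c / r) := by rw [mul_div_assoc, hpow]
  -- tail bound
  have tail_bound : ∑' i : ℕ, g (i + N)
      ≤ ((1 - Real.exp (-1)) ^ (-c) / c) * n ^ (-c / r) := by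
    have TB1 : ∑' i : ℕ, g (i + N) ≤ (N : ℝ) ^ (-c) / c := by
      set F : ℕ → ℝ := fun i => (((i + N : ℕ)) : ℝ) ^ (-c) with hF
      apply Real.tsum_le_of_sum_range_le (fun i => hg_nonneg _)
      intro m
      have hstep : ∀ i ∈ range m, g (i + N) ≤ (F i - F (i + 1)) / c := by
        intro i _
        have hx : (1 : ℝ) ≤ ((i + N : ℕ) : ℝ) := by
          exact_mod_cast le_trans hN1 (Nat.le_add_left N i)
        have h9 := tail_step hc hx
        have hcast : F (i + 1) = (((i + N : ℕ) : ℝ) + 1) ^ (-c) := by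
          simp only [hF]; congr 1; push_cast; ring
        have hcast0 : F i = ((i + N : ℕ) : ℝ) ^ (-c) := rfl
        rw [hcast, hcast0]
        exact le_trans (hg_le (i + N)) h9
      have hF0 : F 0 = (N : ℝ) ^ (-c) := by rw [hF]; norm_num
      calc ∑ i ∈ range m, g (i + N)
          ≤ ∑ i ∈ range m, (F i - F (i + 1)) / c := sum_le_sum hstep
        _ = (F 0 - F m) / c := by rw [← sum_div, Finset.sum_range_sub' F m]
        _ ≤ F 0 / c := div_le_div_of_nonneg_right
            (sub_le_self _ (Real.rpow_nonneg (Nat.cast_nonneg _) _)) hc.le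
        _ = (N : ℝ) ^ (-c) / c := by rw [hF0]
    have TB2 : (N : ℝ) ^ (-c) ≤ (1 - Real.exp (-1)) ^ (-c) * n ^ (-c / r) := by
      have h12 : (0:ℝ) < n ^ (1 / r) * (1 - Real.exp (-1)) := by positivity
      have h13 := Real.rpow_le_rpow_of_nonpos h12 hNge (by linarith : -c ≤ 0)
      rw [Real.mul_rpow hnr0.le hE1.le] at h13
      have h14 : (n ^ (1 / r)) ^ (-c) = n ^ (-c / r) := by
        rw [← Real.rpow_mul hn0.le]; congr 1; ring
      rw [h14] at h13
      calc (N : ℝ) ^ (-c) ≤ n ^ (-c / r) * (1 - Real.exp (-1)) ^ (-c) := h13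
        _ = (1 - Real.exp (-1)) ^ (-c) * n ^ (-c / r) := by ring
    calc ∑' i : ℕ, g (i + N) ≤ (N : ℝ) ^ (-c) / c := TB1
      _ ≤ ((1 - Real.exp (-1)) ^ (-c) * n ^ (-c / r)) / c :=
          div_le_div_of_nonneg_right TB2 hc.le
      _ = ((1 - Real.exp (-1)) ^ (-c) / c) * n ^ (-c / r) := by ring
  have hdecomp := hgsum.sum_add_tsum_nat_add N
  have hfin : ∑' i : ℕ, g i
      ≤ ((1 + 1 / (r - c)) + (1 - Real.exp (-1)) ^ (-c) / c) * n ^ (-c / r) := by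
    rw [← hdecomp, add_mul]
    exact add_le_add head_bound tail_bound
  exact hfin

set_option maxHeartbeats 2000000 in
theorem bias_upper_bound (p q R' C M α β : ℝ)
    (hp : 0 ≤ p) (hR' : 0 < R') (hC : 0 < C) (hM : 0 < M)
    (hβq : 0 < β + q) (hβq' : β + q < 1 + 2 * α + 2 * p)
    (θ l κ : ℕ → ℝ)
    (hθ : ∀ i : ℕ, 1 ≤ i → (θ i) ^ 2 * (i : ℝ) ^ (1 + 2 * β) ≤ M)
    (hl : ∀ i : ℕ, 1 ≤ i → |l i| ≤ R' * (i : ℝ) ^ (-1 / 2 - q))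
    (hκ : ∀ i : ℕ, 1 ≤ i →
      C⁻¹ ^ 2 * (i : ℝ) ^ (-(2 * p)) ≤ (κ i) ^ 2 ∧ (κ i) ^ 2 ≤ C ^ 2 * (i : ℝ) ^ (-(2 * p))) :
    ∃ C' > 0, ∀ n : ℝ, Real.exp (1 + 2 * α + 2 * p) ≤ n →
      Summable (fun i : ℕ =>
        l (i + 1) * θ (i + 1) * ((i + 1 : ℝ) ^ (1 + 2 * α) * ((κ (i + 1))⁻¹) ^ 2) /
          ((i + 1 : ℝ) ^ (1 + 2 * α) * ((κ (i + 1))⁻¹) ^ 2 + n)) ∧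
      |∑' i : ℕ, l (i + 1) * θ (i + 1) * ((i + 1 : ℝ) ^ (1 + 2 * α) * ((κ (i + 1))⁻¹) ^ 2) /
          ((i + 1 : ℝ) ^ (1 + 2 * α) * ((κ (i + 1))⁻¹) ^ 2 + n)| ≤
        C' * n ^ (-(β + q) / (1 + 2 * α + 2 * p)) := by
  obtain ⟨K, hK0, hkey⟩ := key_bound (c := β + q) (r := 1 + 2 * α + 2 * p) hβq hβq'
  have hsqM : 0 < Real.sqrt M := Real.sqrt_pos.2 hM
  have hC1 : (1 : ℝ) ≤ C := by
    have h := hκ 1 le_rfl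
    rw [Nat.cast_one, Real.one_rpow, mul_one, mul_one] at h
    have h1 : C⁻¹ ^ 2 ≤ C ^ 2 := le_trans h.1 h.2
    have h3 : C⁻¹ ^ 2 * C ^ 2 = 1 := by field_simp
    have h2 : (1 : ℝ) ≤ C ^ 2 * C ^ 2 := by nlinarith [sq_nonneg C]
    have h4 : (1 : ℝ) ≤ C ^ 4 := by nlinarith
    exact (one_le_pow_iff_of_nonneg hC.le (by norm_num : (4:ℕ) ≠ 0)).1 h4
  set B : ℝ := R' * Real.sqrt M * C ^ 2 with hB
  have hB0 : 0 < B := by positivity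
  refine ⟨B * K, by positivity, ?_⟩
  intro n hn
  obtain ⟨hsumg, hbound⟩ := hkey n hn
  have hn0 : (0 : ℝ) < n := lt_of_lt_of_le (Real.exp_pos _) hn
  have hfb : ∀ i : ℕ,
      |l (i + 1) * θ (i + 1) * (((i : ℝ) + 1) ^ (1 + 2 * α) * ((κ (i + 1))⁻¹) ^ 2) /
          (((i : ℝ) + 1) ^ (1 + 2 * α) * ((κ (i + 1))⁻¹) ^ 2 + n)| ≤
        B * (((i : ℝ) + 1) ^ (1 + 2 * α + 2 * p - 1 - (β + q)) /
          (((i : ℝ) + 1) ^ (1 + 2 * α + 2 * p) + n)) := by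
    intro i
    have hjR0 : (0 : ℝ) < (i : ℝ) + 1 := by positivity
    have hj1 : 1 ≤ i + 1 := Nat.le_add_left 1 i
    have hcast : ((i + 1 : ℕ) : ℝ) = (i : ℝ) + 1 := by push_cast; ring
    have hθ' := hθ (i + 1) hj1
    have hl' := hl (i + 1) hj1
    obtain ⟨hκ1, hκ2⟩ := hκ (i + 1) hj1
    rw [hcast] at hθ' hl' hκ1 hκ2
    have hκ2pos : 0 < (κ (i + 1)) ^ 2 :=
      lt_of_lt_of_le (by positivity) hκ1
    have hy0 : 0 < ((κ (i + 1)) ^ 2)⁻¹ := inv_pos.2 hκ2pos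
    have hrpos : ∀ e : ℝ, (0 : ℝ) < ((i : ℝ) + 1) ^ e :=
      fun e => Real.rpow_pos_of_pos hjR0 e
    have ha0 : (0 : ℝ) < ((i : ℝ) + 1) ^ (1 + 2 * α + 2 * p) := hrpos _
    -- the fraction bound
    have hyle : ((κ (i + 1)) ^ 2)⁻¹ ≤ C ^ 2 * ((i : ℝ) + 1) ^ (2 * p) := by
      have h6 : (C⁻¹ ^ 2 * ((i : ℝ) + 1) ^ (-(2 * p)))⁻¹
          = C ^ 2 * ((i : ℝ) + 1) ^ (2 * p) := by
        rw [mul_inv, inv_pow, inv_inv, Real.rpow_neg hjR0.le, inv_inv]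
      rw [← h6]
      exact inv_anti₀ (by positivity) hκ1
    have hxle : ((i : ℝ) + 1) ^ (1 + 2 * α) * ((κ (i + 1)) ^ 2)⁻¹
        ≤ C ^ 2 * ((i : ℝ) + 1) ^ (1 + 2 * α + 2 * p) := by
      have hmul9 : ((i : ℝ) + 1) ^ (1 + 2 * α) * ((i : ℝ) + 1) ^ (2 * p)
          = ((i : ℝ) + 1) ^ (1 + 2 * α + 2 * p) := by
        rw [← Real.rpow_add hjR0]
      have h7 : ((i : ℝ) + 1) ^ (1 + 2 * α) * (C ^ 2 * ((i : ℝ) + 1) ^ (2 * p))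
          = C ^ 2 * ((i : ℝ) + 1) ^ (1 + 2 * α + 2 * p) := by
        rw [← hmul9]; ring
      calc ((i : ℝ) + 1) ^ (1 + 2 * α) * ((κ (i + 1)) ^ 2)⁻¹
          ≤ ((i : ℝ) + 1) ^ (1 + 2 * α) * (C ^ 2 * ((i : ℝ) + 1) ^ (2 * p)) :=
            mul_le_mul_of_nonneg_left hyle (hrpos _).le
        _ = C ^ 2 * ((i : ℝ) + 1) ^ (1 + 2 * α + 2 * p) := h7
    set x : ℝ := ((i : ℝ) + 1) ^ (1 + 2 * α) * ((κ (i + 1)) ^ 2)⁻¹ with hxdef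
    set a : ℝ := ((i : ℝ) + 1) ^ (1 + 2 * α + 2 * p) with hadef
    have hx0 : 0 < x := mul_pos (hrpos _) hy0
    have hCa : 0 < C ^ 2 * a := mul_pos (pow_pos hC 2) ha0
    have hfrac : x / (x + n) ≤ C ^ 2 * (a / (a + n)) := by
      have hf1 : x / (x + n) ≤ (C ^ 2 * a) / (C ^ 2 * a + n) := by
        rw [div_le_div_iff₀ (by linarith) (by linarith)]
        nlinarith
      have hf2 : (C ^ 2 * a) / (C ^ 2 * a + n) ≤ (C ^ 2 * a) / (a + n) := by
        have hC2 : (1 : ℝ) ≤ C ^ 2 := by nlinarith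
        apply div_le_div_of_nonneg_left hCa.le (by linarith)
        nlinarith [ha0, hC2]
      have hf3 : (C ^ 2 * a) / (a + n) = C ^ 2 * (a / (a + n)) := by ring
      linarith [hf1, hf2, hf3.le]
    -- the coefficient bound
    have hθabs : |θ (i + 1)| ≤ Real.sqrt M * ((i : ℝ) + 1) ^ (-(1 / 2) - β) := by
      have h8 : (θ (i + 1)) ^ 2 ≤ (Real.sqrt M * ((i : ℝ) + 1) ^ (-(1 / 2) - β)) ^ 2 := by
        have h9 : (Real.sqrt M * ((i : ℝ) + 1) ^ (-(1 / 2) - β)) ^ 2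
            = M * ((i : ℝ) + 1) ^ (-(1 + 2 * β)) := by
          rw [mul_pow, Real.sq_sqrt hM.le, ← Real.rpow_natCast (((i : ℝ) + 1) ^ (-(1 / 2) - β)) 2,
            ← Real.rpow_mul hjR0.le,
            show ((-(1 / 2) : ℝ) - β) * ((2 : ℕ) : ℝ) = -(1 + 2 * β) by push_cast; ring]
        rw [h9]
        have h10 : (θ (i + 1)) ^ 2 * ((i : ℝ) + 1) ^ (1 + 2 * β)
            * ((i : ℝ) + 1) ^ (-(1 + 2 * β)) ≤ M * ((i : ℝ) + 1) ^ (-(1 + 2 * β)) :=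
          mul_le_mul_of_nonneg_right hθ' (hrpos _).le
        have h11 : ((i : ℝ) + 1) ^ (1 + 2 * β) * ((i : ℝ) + 1) ^ (-(1 + 2 * β)) = 1 := by
          rw [← Real.rpow_add hjR0, add_neg_cancel, Real.rpow_zero]
        nlinarith [h10, h11, sq_nonneg (θ (i + 1))]
      calc |θ (i + 1)| = Real.sqrt ((θ (i + 1)) ^ 2) := (Real.sqrt_sq_eq_abs _).symm
        _ ≤ Real.sqrt ((Real.sqrt M * ((i : ℝ) + 1) ^ (-(1 / 2) - β)) ^ 2) :=
            Real.sqrt_le_sqrt h8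
        _ = |Real.sqrt M * ((i : ℝ) + 1) ^ (-(1 / 2) - β)| := Real.sqrt_sq_eq_abs _
        _ = Real.sqrt M * ((i : ℝ) + 1) ^ (-(1 / 2) - β) :=
            abs_of_nonneg (by positivity)
    have hlθ : |l (i + 1) * θ (i + 1)|
        ≤ R' * Real.sqrt M * ((i : ℝ) + 1) ^ (-1 - (β + q)) := by
      have h12 : (R' * ((i : ℝ) + 1) ^ (-1 / 2 - q)) *
          (Real.sqrt M * ((i : ℝ) + 1) ^ (-(1 / 2) - β))
          = R' * Real.sqrt M * ((i : ℝ) + 1) ^ (-1 - (β + q)) := by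
        rw [show (-1 - (β + q) : ℝ) = (-1 / 2 - q) + (-(1 / 2) - β) from by ring,
          Real.rpow_add hjR0]
        ring
      rw [abs_mul, ← h12]
      exact mul_le_mul hl' hθabs (abs_nonneg _) (by positivity)
    -- assemble
    have hEabs : |l (i + 1) * θ (i + 1) * x / (x + n)|
        = |l (i + 1) * θ (i + 1)| * (x / (x + n)) := by
      rw [abs_div, abs_mul, abs_of_pos hx0, abs_of_pos (by linarith : (0:ℝ) < x + n),
        mul_div_assoc]
    have hcomb : |l (i + 1) * θ (i + 1)| * (x / (x + n))
        ≤ (R' * Real.sqrt M * ((i : ℝ) + 1) ^ (-1 - (β + q))) * (C ^ 2 * (a / (a + n))) :=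
      mul_le_mul hlθ hfrac (div_nonneg hx0.le (by linarith)) (by positivity)
    have hexp : ((i : ℝ) + 1) ^ (-1 - (β + q)) * a
        = ((i : ℝ) + 1) ^ (1 + 2 * α + 2 * p - 1 - (β + q)) := by
      rw [hadef, ← Real.rpow_add hjR0]
      congr 1; ring
    have hfinal : (R' * Real.sqrt M * ((i : ℝ) + 1) ^ (-1 - (β + q))) * (C ^ 2 * (a / (a + n)))
        = B * (((i : ℝ) + 1) ^ (1 + 2 * α + 2 * p - 1 - (β + q)) / (a + n)) := by
      rw [hB, ← hexp]
      ring
    have hgoal : |l (i + 1) * θ (i + 1) * (((i : ℝ) + 1) ^ (1 + 2 * α) * ((κ (i + 1))⁻¹) ^ 2) /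
          (((i : ℝ) + 1) ^ (1 + 2 * α) * ((κ (i + 1))⁻¹) ^ 2 + n)|
        = |l (i + 1) * θ (i + 1) * x / (x + n)| := by
      rw [hxdef, inv_pow]
    rw [hgoal, hEabs]
    exact le_trans hcomb (le_of_eq hfinal)
  have hBsum : Summable (fun i : ℕ =>
      B * (((i : ℝ) + 1) ^ (1 + 2 * α + 2 * p - 1 - (β + q)) /
        (((i : ℝ) + 1) ^ (1 + 2 * α + 2 * p) + n))) := hsumg.mul_left B
  have habs_sum : Summable (fun i : ℕ =>
      |l (i + 1) * θ (i + 1) * (((i : ℝ) + 1) ^ (1 + 2 * α) * ((κ (i + 1))⁻¹) ^ 2) /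
        (((i : ℝ) + 1) ^ (1 + 2 * α) * ((κ (i + 1))⁻¹) ^ 2 + n)|) :=
    Summable.of_nonneg_of_le (fun i => abs_nonneg _) hfb hBsum
  have hFsum : Summable (fun i : ℕ =>
      l (i + 1) * θ (i + 1) * (((i : ℝ) + 1) ^ (1 + 2 * α) * ((κ (i + 1))⁻¹) ^ 2) /
        (((i : ℝ) + 1) ^ (1 + 2 * α) * ((κ (i + 1))⁻¹) ^ 2 + n)) :=
    Summable.of_norm (by simpa only [Real.norm_eq_abs] using habs_sum)
  refine ⟨hFsum, ?_⟩
  calc |∑' i : ℕ, l (i + 1) * θ (i + 1) * (((i : ℝ) + 1) ^ (1 + 2 * α) * ((κ (i + 1))⁻¹) ^ 2) /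
          (((i : ℝ) + 1) ^ (1 + 2 * α) * ((κ (i + 1))⁻¹) ^ 2 + n)|
      ≤ ∑' i : ℕ, |l (i + 1) * θ (i + 1) * (((i : ℝ) + 1) ^ (1 + 2 * α) * ((κ (i + 1))⁻¹) ^ 2) /
          (((i : ℝ) + 1) ^ (1 + 2 * α) * ((κ (i + 1))⁻¹) ^ 2 + n)| := by
        have hnorm := norm_tsum_le_tsum_norm (f := fun i : ℕ =>
          l (i + 1) * θ (i + 1) * (((i : ℝ) + 1) ^ (1 + 2 * α) * ((κ (i + 1))⁻¹) ^ 2) /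
            (((i : ℝ) + 1) ^ (1 + 2 * α) * ((κ (i + 1))⁻¹) ^ 2 + n))
          (by simpa only [Real.norm_eq_abs] using habs_sum)
        simpa only [Real.norm_eq_abs] using hnorm
    _ ≤ ∑' i : ℕ, B * (((i : ℝ) + 1) ^ (1 + 2 * α + 2 * p - 1 - (β + q)) /
          (((i : ℝ) + 1) ^ (1 + 2 * α + 2 * p) + n)) := Summable.tsum_le_tsum hfb habs_sum hBsum
    _ = B * ∑' i : ℕ, ((i : ℝ) + 1) ^ (1 + 2 * α + 2 * p - 1 - (β + q)) /
          (((i : ℝ) + 1) ^ (1 + 2 * α + 2 * p) + n) := tsum_mul_left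
    _ ≤ B * (K * n ^ (-(β + q) / (1 + 2 * α + 2 * p))) :=
        mul_le_mul_of_nonneg_left hbound hB0.le
    _ = (B * K) * n ^ (-(β + q) / (1 + 2 * α + 2 * p)) := by ring
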